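/- Let (A_i)_{i∈κ} be infinite Boolean algebras, D an ultrafilter on κ, λ_i = π(A_i), and let λ be the D-limit of (λ_i), i.e., the least cardinal ρ such that {i : λ_i ≤ ρ} ∈ D. Then the ultraproduct A = ∏ A_i / D satisfies π(A) ≥ λ. -/

import Mathlib

open Cardinal

universe u v

/-- The algebraic density `π A` of a Boolean algebra: the least cardinality of a
dense subset of `A \ {⊥}`. -/
noncomputable def piDensity (A : Type v) [BooleanAlgebra A] : Cardinal.{v} :=
  sInf {c | ∃ X : Set A, (∀ x ∈ X, x ≠ ⊥) ∧ (∀ a : A, a ≠ ⊥ → ∃ x ∈ X, x ≤ a) ∧ c = #X}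

section BUP

variable {ι : Type u} (D : Ultrafilter ι) (A : ι → Type u) [∀ i, BooleanAlgebra (A i)]

instance piBooleanRing : BooleanRing (∀ i, AsBoolRing (A i)) :=
  { Pi.ring with isIdempotentElem := fun f => funext fun i => BooleanRing.mul_self (f i) }

/-- The ideal of elements vanishing `D`-almost everywhere. -/
def upIdeal : Ideal (∀ i, AsBoolRing (A i)) where
  carrier := {f | {i | f i = 0} ∈ D}
  zero_mem' := by
    have : {i | (0 : ∀ i, AsBoolRing (A i)) i = 0} = Set.univ := by ext i; simp
    simp only [Set.mem_setOf_eq] at *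
    exact this ▸ Filter.univ_mem
  add_mem' := by
    intro f g hf hg
    filter_upwards [hf, hg] with i h1 h2
    simp only [Pi.add_apply, h1, h2, add_zero]
  smul_mem' := by
    intro c f hf
    filter_upwards [hf] with i h1
    simp only [smul_eq_mul, Pi.mul_apply, h1, mul_zero]

instance upQuotBooleanRing : BooleanRing ((∀ i, AsBoolRing (A i)) ⧸ upIdeal D A) :=
  { (inferInstance : CommRing ((∀ i, AsBoolRing (A i)) ⧸ upIdeal D A)) with
    isIdempotentElem := fun a => by
      obtain ⟨f, rfl⟩ := Ideal.Quotient.mk_surjective a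
      show _ * _ = _
      rw [← map_mul, BooleanRing.mul_self] }

/-- The Boolean ultraproduct `∏ᵢ Aᵢ / D`. -/
def BUP : Type u := AsBoolAlg ((∀ i, AsBoolRing (A i)) ⧸ upIdeal D A)

noncomputable instance : BooleanAlgebra (BUP D A) :=
  inferInstanceAs (BooleanAlgebra (AsBoolAlg _))

end BUP

section cardUP

variable {ι : Type u} (D : Ultrafilter ι)

/-- Set-theoretic ultraproduct of a family of cardinals, seen as the quotient of the
product of the corresponding sets of ordinals by `D`-almost-everywhere equality. -/
def cardSetoid (lam : ι → Cardinal.{u}) :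
    Setoid (∀ i, (lam i).ord.ToType) where
  r f g := {i | f i = g i} ∈ D
  iseqv := by
    refine ⟨fun f => by
      have : {i | f i = f i} = Set.univ := by ext i; simp
      rw [this]; exact Filter.univ_mem, fun {f g} h => ?_, fun {f g h} h1 h2 => ?_⟩
    · filter_upwards [h] with i hi using hi.symm
    · filter_upwards [h1, h2] with i hi1 hi2 using hi1.trans hi2

/-- The cardinality of the ultraproduct `∏ᵢ λᵢ / D` of a family of cardinals. -/
noncomputable def cardUP (lam : ι → Cardinal.{u}) : Cardinal.{u} :=
  #(Quotient (cardSetoid D lam))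

end cardUP

/-- Claim 2 of Theorem 1.1: if `lam` is the `D`-limit of the densities `π Aᵢ`, then the
Boolean ultraproduct `A = ∏ Aᵢ / D` satisfies `π A ≥ lam`. -/
theorem dLimit_le_piDensity_ultraproduct {ι : Type u} (D : Ultrafilter ι) (A : ι → Type u)
    [∀ i, BooleanAlgebra (A i)] [∀ i, Infinite (A i)] (lam : Cardinal.{u})
    (hlim : IsLeast {ρ : Cardinal.{u} | {i | piDensity (A i) ≤ ρ} ∈ D} lam) :
    lam ≤ piDensity (BUP D A) := by
  set μ := piDensity (BUP D A) with hμdef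
  -- the defining set of `piDensity (BUP D A)` is nonempty, so `csInf_mem` applies
  have hne : {c | ∃ X : Set (BUP D A), (∀ x ∈ X, x ≠ ⊥) ∧
      (∀ a : BUP D A, a ≠ ⊥ → ∃ x ∈ X, x ≤ a) ∧ c = #X}.Nonempty := by
    refine ⟨#{a : BUP D A | a ≠ ⊥}, {a : BUP D A | a ≠ ⊥}, fun x hx => hx, ?_, rfl⟩
    exact fun a ha => ⟨a, ha, le_rfl⟩
  obtain ⟨X, hX0, hXd, hμ⟩ := csInf_mem hne
  -- choose representatives of elements of `X`
  have hrep : ∀ x : BUP D A, ∃ f : ∀ i, AsBoolRing (A i),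
      Ideal.Quotient.mk (upIdeal D A) f = ofBoolAlg x :=
    fun x => Ideal.Quotient.mk_surjective (ofBoolAlg x)
  choose g hg using hrep
  -- it suffices to show that `{i | piDensity (A i) ≤ μ} ∈ D`
  refine hlim.2 ?_
  by_contra hmem
  have hS : {i | piDensity (A i) ≤ μ}ᶜ ∈ D := Ultrafilter.compl_mem_iff_notMem.2 hmem
  -- traces of `X` at coordinate `i`
  set Y : ∀ i, Set (A i) := fun i =>
    {a : A i | a ≠ ⊥ ∧ ∃ x ∈ X, ofBoolRing (g x i) = a} with hYdef
  have hYcard : ∀ i, #(Y i) ≤ μ := by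
    intro i
    have h1 : Y i ⊆ Set.range (fun x : X => ofBoolRing (g (x : BUP D A) i)) := by
      rintro a ⟨-, x, hx, rfl⟩
      exact ⟨⟨x, hx⟩, rfl⟩
    calc #(Y i) ≤ #(Set.range (fun x : X => ofBoolRing (g (x : BUP D A) i))) :=
          Cardinal.mk_le_mk_of_subset h1
      _ ≤ #X := Cardinal.mk_range_le
      _ = μ := hμ.symm
  -- for `i` with `μ < piDensity (A i)`, the trace `Y i` is not dense
  have hb : ∀ i, ∃ b : A i, b ≠ ⊥ ∧ (¬ piDensity (A i) ≤ μ → ∀ y ∈ Y i, ¬ y ≤ b) := by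
    intro i
    by_cases hi : piDensity (A i) ≤ μ
    · obtain ⟨b, hb⟩ := exists_ne (⊥ : A i)
      exact ⟨b, hb, fun h => absurd hi h⟩
    · have hex : ∃ b : A i, b ≠ ⊥ ∧ ∀ y ∈ Y i, ¬ y ≤ b := by
        by_contra hcon
        push_neg at hcon
        have hdense : piDensity (A i) ≤ #(Y i) := by
          apply csInf_le ⟨0, fun c _ => c.zero_le⟩
          refine ⟨Y i, fun y hy => hy.1, ?_, rfl⟩
          intro a ha
          obtain ⟨y, hy1, hy2⟩ := hcon a ha
          exact ⟨y, hy1, hy2⟩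
        exact hi (hdense.trans (hYcard i))
      obtain ⟨bb, h1, h2⟩ := hex
      exact ⟨bb, h1, fun _ => h2⟩
  choose b hb0 hbS using hb
  -- the class of `b` in the ultraproduct is nonzero
  set B : BUP D A := toBoolAlg (Ideal.Quotient.mk (upIdeal D A) (fun i => toBoolRing (b i)))
    with hBdef
  have hBne : B ≠ ⊥ := by
    intro h
    have h0 : Ideal.Quotient.mk (upIdeal D A) (fun i => toBoolRing (b i)) = 0 := h
    have h1 : (fun i => toBoolRing (b i)) ∈ upIdeal D A :=
      (Ideal.Quotient.eq_zero_iff_mem).1 h0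
    have h2 : {i | toBoolRing (b i) = (0 : AsBoolRing (A i))} ∈ D := h1
    obtain ⟨i, hi⟩ := D.nonempty_of_mem h2
    exact hb0 i hi
  -- density of `X` gives `x ≤ B`
  obtain ⟨x, hxX, hxB⟩ := hXd B hBne
  -- translate `x ≤ B` to an almost-everywhere pointwise inequality
  have hle : ofBoolAlg x * ofBoolAlg B = ofBoolAlg x :=
    ofBoolAlg_mul_ofBoolAlg_eq_left_iff.2 hxB
  have hle2 : Ideal.Quotient.mk (upIdeal D A) (g x * fun i => toBoolRing (b i)) =
      Ideal.Quotient.mk (upIdeal D A) (g x) := by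
    rw [map_mul, hg x]; exact hle
  have hle3 : (g x * fun i => toBoolRing (b i)) - g x ∈ upIdeal D A :=
    (Ideal.Quotient.eq).1 hle2
  have hle4 : {i | (g x i) * toBoolRing (b i) - g x i = 0} ∈ D := hle3
  -- `x ≠ ⊥` gives that `g x i ≠ 0` almost everywhere
  have hx0 : {i | g x i = 0} ∉ D := by
    intro h
    have h1 : g x ∈ upIdeal D A := h
    have h2 : Ideal.Quotient.mk (upIdeal D A) (g x) = 0 :=
      (Ideal.Quotient.eq_zero_iff_mem).2 h1
    have h3 : ofBoolAlg x = (0 : (∀ i, AsBoolRing (A i)) ⧸ upIdeal D A) := by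
      rw [← hg x, h2]
    exact hX0 x hxX (by
      have : x = toBoolAlg (0 : (∀ i, AsBoolRing (A i)) ⧸ upIdeal D A) := by
        rw [← h3]; rfl
      exact this)
  have hx0' : {i | g x i = 0}ᶜ ∈ D := Ultrafilter.compl_mem_iff_notMem.2 hx0
  -- intersect the three large sets
  have hbig : ({i | piDensity (A i) ≤ μ}ᶜ ∩ ({i | (g x i) * toBoolRing (b i) - g x i = 0}
      ∩ {i | g x i = 0}ᶜ)) ∈ D :=
    Filter.inter_mem hS (Filter.inter_mem hle4 hx0')
  obtain ⟨i, hiS, hiT, hiU⟩ := D.nonempty_of_mem hbig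
  -- derive the contradiction at coordinate `i`
  have hy : ofBoolRing (g x i) ∈ Y i := by
    refine ⟨?_, x, hxX, rfl⟩
    intro h
    exact hiU h
  have hyb : ofBoolRing (g x i) ≤ b i := by
    have h1 : g x i * toBoolRing (b i) = g x i := by
      have := sub_eq_zero.1 hiT
      exact this
    have h2 : ofBoolRing (g x i * toBoolRing (b i)) = ofBoolRing (g x i) := by rw [h1]
    rw [ofBoolRing_mul] at h2
    have : ofBoolRing (toBoolRing (b i)) = b i := rfl
    rw [this] at h2
    exact inf_eq_left.1 h2
  exact hbS i hiS _ hy hyb
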